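/- arXiv:1205.6123 — 3 statements merged into one kernel-verified Lean document; each statement's English description precedes it below -/
import Mathlib

section
/- The Cartesian product of two interval-valued fuzzy graphs is an interval-valued fuzzy graph. That is, if G1=(A1,B1) and G2=(A2,B2) are interval-valued fuzzy graphs of crisp graphs G1*=(V1,E1) and G2*=(V2,E2), then (A1×A2, B1×B2) is an interval-valued fuzzy graph of the Cartesian product graph G1*×G2*. -/
/-- `(A,B)` is an interval-valued fuzzy graph of the crisp graph `G`. -/
def IsIVFG {V : Type*} (G : SimpleGraph V) (am ap : V → ℝ) (bm bp : V → V → ℝ) : Prop :=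
  (∀ x, 0 ≤ am x ∧ am x ≤ ap x ∧ ap x ≤ 1) ∧
  (∀ x y, G.Adj x y →
    0 ≤ bm x y ∧ bm x y ≤ bp x y ∧
    bm x y ≤ min (am x) (am y) ∧ bp x y ≤ min (ap x) (ap y))

/-- The Cartesian product of two interval-valued fuzzy graphs is an
interval-valued fuzzy graph of the Cartesian product of the crisp graphs. -/
theorem ivfg_boxProd {V1 V2 : Type*} [DecidableEq V1] [DecidableEq V2]
    (G1 : SimpleGraph V1) (G2 : SimpleGraph V2)
    (am1 ap1 : V1 → ℝ) (bm1 bp1 : V1 → V1 → ℝ)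
    (am2 ap2 : V2 → ℝ) (bm2 bp2 : V2 → V2 → ℝ)
    (h1 : IsIVFG G1 am1 ap1 bm1 bp1) (h2 : IsIVFG G2 am2 ap2 bm2 bp2) :
    IsIVFG (G1 □ G2)
      (fun p => min (am1 p.1) (am2 p.2))
      (fun p => min (ap1 p.1) (ap2 p.2))
      (fun p q => if p.1 = q.1 then min (am1 p.1) (bm2 p.2 q.2)
                  else min (bm1 p.1 q.1) (am2 p.2))
      (fun p q => if p.1 = q.1 then min (ap1 p.1) (bp2 p.2 q.2)
                  else min (bp1 p.1 q.1) (ap2 p.2)) := by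
  obtain ⟨hv1, he1⟩ := h1
  obtain ⟨hv2, he2⟩ := h2
  constructor
  · intro ⟨x, y⟩
    obtain ⟨a1, a2, a3⟩ := hv1 x
    obtain ⟨b1, b2, b3⟩ := hv2 y
    exact ⟨le_min a1 b1, min_le_min a2 b2, min_le_of_left_le a3⟩
  · rintro ⟨x1, x2⟩ ⟨y1, y2⟩ h
    rw [SimpleGraph.boxProd_adj] at h
    rcases h with ⟨hadj, heq⟩ | ⟨hadj, heq⟩
    · subst heq
      have hne : x1 ≠ y1 := G1.ne_of_adj hadj
      simp only [if_neg hne]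
      obtain ⟨e1, e2, e3, e4⟩ := he1 x1 y1 hadj
      obtain ⟨a1, a2, a3⟩ := hv2 x2
      rw [le_min_iff] at e3 e4
      refine ⟨le_min e1 a1, min_le_min e2 a2, ?_, ?_⟩ <;>
        simp only [if_true, le_min_iff, min_le_iff] <;> tauto
    · subst heq
      simp only [if_pos rfl]
      obtain ⟨e1, e2, e3, e4⟩ := he2 x2 y2 hadj
      obtain ⟨a1, a2, a3⟩ := hv1 x1
      rw [le_min_iff] at e3 e4
      have r1 : am1 x1 ≤ am1 x1 := le_rfl
      have r2 : ap1 x1 ≤ ap1 x1 := le_rfl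
      refine ⟨le_min a1 e1, min_le_min a2 e2, ?_, ?_⟩ <;>
        simp only [if_true, le_min_iff, min_le_iff] <;> tauto
end

section
/- The composition G1[G2] of two interval-valued fuzzy graphs G1 and G2 of crisp graphs G1* and G2* is an interval-valued fuzzy graph of the composition graph G1*[G2*]. -/
/-- The composition `G1*[G2*]` of crisp graphs: `(x1,x2)(y1,y2)` is an edge iff
either `x1 = y1` and `x2 y2 ∈ E2`, or `x1 y1 ∈ E1`. -/
def compGraph {V1 V2 : Type*} (G1 : SimpleGraph V1) (G2 : SimpleGraph V2) :
    SimpleGraph (V1 × V2) where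
  Adj p q := (p.1 = q.1 ∧ G2.Adj p.2 q.2) ∨ G1.Adj p.1 q.1
  symm := by
    constructor
    rintro p q (⟨h1, h2⟩ | h)
    · exact Or.inl ⟨h1.symm, h2.symm⟩
    · exact Or.inr h.symm
  loopless := by
    constructor
    rintro p (⟨_, h⟩ | h)
    · exact G2.loopless.irrefl _ h
    · exact G1.loopless.irrefl _ h

/-- The composition of two interval-valued fuzzy graphs is an
interval-valued fuzzy graph of the composition of the crisp graphs. -/
theorem ivfg_comp {V1 V2 : Type*} [DecidableEq V1] [DecidableEq V2]
    (G1 : SimpleGraph V1) (G2 : SimpleGraph V2)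
    (am1 ap1 : V1 → ℝ) (bm1 bp1 : V1 → V1 → ℝ)
    (am2 ap2 : V2 → ℝ) (bm2 bp2 : V2 → V2 → ℝ)
    (h1 : IsIVFG G1 am1 ap1 bm1 bp1) (h2 : IsIVFG G2 am2 ap2 bm2 bp2) :
    IsIVFG (compGraph G1 G2)
      (fun p => min (am1 p.1) (am2 p.2))
      (fun p => min (ap1 p.1) (ap2 p.2))
      (fun p q => if p.1 = q.1 then min (am1 p.1) (bm2 p.2 q.2)
                  else if p.2 = q.2 then min (bm1 p.1 q.1) (am2 p.2)
                  else min (min (am2 p.2) (am2 q.2)) (bm1 p.1 q.1))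
      (fun p q => if p.1 = q.1 then min (ap1 p.1) (bp2 p.2 q.2)
                  else if p.2 = q.2 then min (bp1 p.1 q.1) (ap2 p.2)
                  else min (min (ap2 p.2) (ap2 q.2)) (bp1 p.1 q.1)) := by
  obtain ⟨ha1, hb1⟩ := h1
  obtain ⟨ha2, hb2⟩ := h2
  constructor
  · intro x
    obtain ⟨c1, c2, c3⟩ := ha1 x.1
    obtain ⟨d1, d2, d3⟩ := ha2 x.2
    exact ⟨le_min c1 d1, min_le_min c2 d2, le_trans (min_le_left _ _) c3⟩
  · rintro ⟨x1, x2⟩ ⟨y1, y2⟩ (⟨heq, hadj⟩ | hadj)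
    · dsimp only at heq ⊢
      subst heq
      simp only [if_pos rfl, if_true, eq_self_iff_true]
      obtain ⟨c1, c2, c3⟩ := ha1 x1
      obtain ⟨d1, d2, d3, d4⟩ := hb2 x2 y2 hadj
      refine ⟨le_min c1 d1, min_le_min c2 d2, ?_, ?_⟩
      · exact le_min
          (le_min (min_le_left _ _)
                  (le_trans (min_le_right _ _) (le_trans d3 (min_le_left _ _))))
          (le_min (min_le_left _ _)
                  (le_trans (min_le_right _ _) (le_trans d3 (min_le_right _ _))))
      · exact le_min
          (le_min (min_le_left _ _)
                  (le_trans (min_le_right _ _) (le_trans d4 (min_le_left _ _))))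
          (le_min (min_le_left _ _)
                  (le_trans (min_le_right _ _) (le_trans d4 (min_le_right _ _))))
    · dsimp only at hadj ⊢
      have hne : x1 ≠ y1 := hadj.ne
      simp only [if_neg hne]
      obtain ⟨c1, c2, c3, c4⟩ := hb1 x1 y1 hadj
      obtain ⟨d1, d2, d3⟩ := ha2 x2
      obtain ⟨e1, e2, e3⟩ := ha2 y2
      by_cases h : x2 = y2
      · subst h
        simp only [if_pos rfl, if_true, eq_self_iff_true]
        refine ⟨le_min c1 d1, min_le_min c2 d2, ?_, ?_⟩
        · exact le_min
            (le_min (le_trans (min_le_left _ _) (le_trans c3 (min_le_left _ _)))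
                    (min_le_right _ _))
            (le_min (le_trans (min_le_left _ _) (le_trans c3 (min_le_right _ _)))
                    (min_le_right _ _))
        · exact le_min
            (le_min (le_trans (min_le_left _ _) (le_trans c4 (min_le_left _ _)))
                    (min_le_right _ _))
            (le_min (le_trans (min_le_left _ _) (le_trans c4 (min_le_right _ _)))
                    (min_le_right _ _))
      · simp only [if_neg h]
        refine ⟨le_min (le_min d1 e1) c1, min_le_min (min_le_min d2 e2) c2, ?_, ?_⟩
        · exact le_min
            (le_min (le_trans (min_le_right _ _) (le_trans c3 (min_le_left _ _)))
                    (le_trans (min_le_left _ _) (min_le_left _ _)))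
            (le_min (le_trans (min_le_right _ _) (le_trans c3 (min_le_right _ _)))
                    (le_trans (min_le_left _ _) (min_le_right _ _)))
        · exact le_min
            (le_min (le_trans (min_le_right _ _) (le_trans c4 (min_le_left _ _)))
                    (le_trans (min_le_left _ _) (min_le_left _ _)))
            (le_min (le_trans (min_le_right _ _) (le_trans c4 (min_le_right _ _)))
                    (le_trans (min_le_left _ _) (min_le_right _ _)))
end

section
/- If G=(A,B) is an interval-valued fuzzy complete graph, then its composition with itself G[G] is an interval-valued fuzzy complete graph. -/
/-- If `G = (A,B)` is an interval-valued fuzzy complete graph (on the complete crisp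
graph, so every pair of distinct vertices is an edge), then the composition `G[G]`
is again an interval-valued fuzzy complete graph: the edge membership of `G[G]` on
every pair of distinct vertices of `V × V` is the `min` of the endpoint vertex
memberships. -/
theorem ivfg_complete_comp {V : Type*} [DecidableEq V]
    (am ap : V → ℝ) (bm bp : V → V → ℝ)
    (hv : ∀ x, 0 ≤ am x ∧ am x ≤ ap x ∧ ap x ≤ 1)
    (hcomplete : ∀ x y : V, x ≠ y →
      bm x y = min (am x) (am y) ∧ bp x y = min (ap x) (ap y)) :
    ∀ p q : V × V, p ≠ q →
      ((if p.1 = q.1 then min (am p.1) (bm p.2 q.2)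
        else if p.2 = q.2 then min (bm p.1 q.1) (am p.2)
        else min (min (am p.2) (am q.2)) (bm p.1 q.1))
          = min (min (am p.1) (am p.2)) (min (am q.1) (am q.2))) ∧
      ((if p.1 = q.1 then min (ap p.1) (bp p.2 q.2)
        else if p.2 = q.2 then min (bp p.1 q.1) (ap p.2)
        else min (min (ap p.2) (ap q.2)) (bp p.1 q.1))
          = min (min (ap p.1) (ap p.2)) (min (ap q.1) (ap q.2))) := by
  rintro ⟨x1, x2⟩ ⟨y1, y2⟩ hpq
  simp only [ne_eq, Prod.mk.injEq, not_and_or] at hpq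
  by_cases h1 : x1 = y1
  · subst h1
    have h2 : x2 ≠ y2 := by tauto
    obtain ⟨e1, e2⟩ := hcomplete x2 y2 h2
    simp [e1, e2, inf_inf_distrib_left]
  · by_cases h2 : x2 = y2
    · subst h2
      obtain ⟨e1, e2⟩ := hcomplete x1 y1 h1
      constructor <;> simp [e1, e2, h1, inf_inf_distrib_right]
    · obtain ⟨e1, e2⟩ := hcomplete x1 y1 h1
      constructor <;> simp only [if_neg h1, if_neg h2, e1, e2] <;>
        · simp only [min_assoc, min_comm, min_left_comm]
end
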